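/- For every real inner product space and every family of vectors (V_w), and at every grade n: ⟨|S|, |S|⟩ = ⟨S, S⟩ = ⟨id, id⟩, where S is the antipode, |S| the reversal endomorphism, id the identity endomorphism, and the inner product is taken over the words of length n. -/

import Mathlib

open Finsupp

/-- Words over the alphabet `A = {0,1,…,d}`. -/
abbrev Word (d : ℕ) : Type := List (Fin (d+1))

/-- The free real vector space with basis the set of all words. -/
abbrev KA (d : ℕ) : Type := Word d →₀ ℝ

/-- Shuffle product of two words, as an element of `KA d`. -/
noncomputable def shuffleWord (d : ℕ) : Word d → Word d → KA d
  | [], v => Finsupp.single v 1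
  | a :: u, [] => Finsupp.single (a :: u) 1
  | a :: u, b :: v =>
      Finsupp.mapDomain (List.cons a) (shuffleWord d u (b :: v)) +
      Finsupp.mapDomain (List.cons b) (shuffleWord d (a :: u) v)
  termination_by u v => u.length + v.length

/-- Bilinear extension of the shuffle product to `KA d`. -/
noncomputable def sh (d : ℕ) (x y : KA d) : KA d :=
  x.sum fun u cu => y.sum fun v cv => (cu * cv) • shuffleWord d u v

/-- Admissible words: concatenations of blocks each of which is the single
letter `0` or a pair `aa` with `a ≠ 0`. -/
inductive Admissible (d : ℕ) : Word d → Prop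
  | nil : Admissible d []
  | zero {w : Word d} : Admissible d w → Admissible d (0 :: w)
  | pair {w : Word d} (a : Fin (d+1)) : a ≠ 0 → Admissible d w →
      Admissible d (a :: a :: w)

/-- Number of `0` letters. -/
def zc (d : ℕ) (w : Word d) : ℕ := w.count 0

/-- Half the number of nonzero letters. -/
def dc (d : ℕ) (w : Word d) : ℕ := (w.length - w.count 0) / 2

def nc (d : ℕ) (w : Word d) : ℕ := zc d w + dc d w

open Classical in
/-- The expectation map on words. -/
noncomputable def Ebar (d : ℕ) (t : ℝ) (w : Word d) : ℝ :=
  if Admissible d w then t ^ nc d w / (2 ^ dc d w * Nat.factorial (nc d w)) else 0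

/-- Linear extension of the expectation map to `KA d`. -/
noncomputable def EbarL (d : ℕ) (t : ℝ) (x : KA d) : ℝ :=
  x.sum fun w c => c * Ebar d t w

/-- The linear endomorphism of `KA d` determined by values on basis words. -/
noncomputable def wordLift (d : ℕ) (f : Word d → KA d) : KA d →ₗ[ℝ] KA d :=
  Finsupp.lsum ℝ fun w => LinearMap.toSpanSingleton ℝ (KA d) (f w)

/-- The identity endomorphism `id`. -/
noncomputable def idE (d : ℕ) : KA d →ₗ[ℝ] KA d := LinearMap.id

/-- The reversal endomorphism `|S|`. -/
noncomputable def revE (d : ℕ) : KA d →ₗ[ℝ] KA d :=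
  wordLift d fun w => Finsupp.single w.reverse 1

/-- The antipode `S`. -/
noncomputable def Sa (d : ℕ) : KA d →ₗ[ℝ] KA d :=
  wordLift d fun w => Finsupp.single w.reverse ((-1 : ℝ) ^ w.length)

/-- The convolution unit `ν`. -/
noncomputable def nuE (d : ℕ) : KA d →ₗ[ℝ] KA d :=
  wordLift d fun w => if w = [] then Finsupp.single ([] : Word d) 1 else 0

/-- The expectation endomorphism `E`. -/
noncomputable def EE (d : ℕ) (t : ℝ) : KA d →ₗ[ℝ] KA d :=
  wordLift d fun w => Finsupp.single ([] : Word d) (Ebar d t w)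

/-- The convolution product `X ⋆ Y`. -/
noncomputable def conv (d : ℕ) (X Y : KA d →ₗ[ℝ] KA d) : KA d →ₗ[ℝ] KA d :=
  wordLift d fun w => ∑ k ∈ Finset.range (w.length + 1),
    sh d (X (Finsupp.single (w.take k) 1)) (Y (Finsupp.single (w.drop k) 1))

/-- Convolution powers, `X^{⋆0} = ν`. -/
noncomputable def convPow (d : ℕ) (X : KA d →ₗ[ℝ] KA d) : ℕ → (KA d →ₗ[ℝ] KA d)
  | 0 => nuE d
  | k + 1 => conv d X (convPow d X k)

/-- The inner product `⟨X,Y⟩` of endomorphisms, taken over the words of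
length `n`, relative to the family of vectors `Vf`. -/
noncomputable def ip (d : ℕ) (t : ℝ) {H : Type*} [NormedAddCommGroup H]
    [InnerProductSpace ℝ H] (Vf : Word d → H) (n : ℕ)
    (X Y : KA d →ₗ[ℝ] KA d) : ℝ :=
  ∑ u : Fin n → Fin (d+1), ∑ v : Fin n → Fin (d+1),
    EbarL d t (sh d (X (Finsupp.single (List.ofFn u) 1))
                    (Y (Finsupp.single (List.ofFn v) 1))) *
      (inner ℝ (Vf (List.ofFn u)) (Vf (List.ofFn v)) : ℝ)

/-- Positive semidefiniteness of the expectation Gram matrix at grade `n`: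
indexed by the words of length `n` together with the empty word. -/
def gramPSD (d n : ℕ) (t : ℝ) : Prop :=
  ∀ c : Option (Fin n → Fin (d+1)) → ℝ,
    0 ≤ ∑ x : Option (Fin n → Fin (d+1)), ∑ y : Option (Fin n → Fin (d+1)),
      c x * c y *
        EbarL d t (shuffleWord d (x.elim ([] : Word d) List.ofFn)
                                 (y.elim ([] : Word d) List.ofFn))

lemma shuffle_nil_left (d : ℕ) (v : Word d) : shuffleWord d [] v = Finsupp.single v 1 := by
  rw [shuffleWord]

lemma shuffle_nil_right (d : ℕ) (u : Word d) : shuffleWord d u [] = Finsupp.single u 1 := by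
  cases u <;> rw [shuffleWord]

lemma shuffle_cons (d : ℕ) (a b : Fin (d+1)) (u v : Word d) :
    shuffleWord d (a :: u) (b :: v) =
      Finsupp.mapDomain (List.cons a) (shuffleWord d u (b :: v)) +
      Finsupp.mapDomain (List.cons b) (shuffleWord d (a :: u) v) := by
  rw [shuffleWord]

lemma cons_append_single (d : ℕ) (c : Fin (d+1)) (b : Fin (d+1)) :
    (List.cons c ∘ (· ++ [b]) : Word d → Word d) = ((· ++ [b]) ∘ List.cons c) := by
  funext x; simp

lemma mapDomain_cons_append (d : ℕ) (c b : Fin (d+1)) (x : KA d) :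
    Finsupp.mapDomain (List.cons c) (Finsupp.mapDomain (· ++ [b]) x) =
    Finsupp.mapDomain (· ++ [b]) (Finsupp.mapDomain (List.cons c) x) := by
  rw [← Finsupp.mapDomain_comp, ← Finsupp.mapDomain_comp, cons_append_single]

lemma shuffle_snoc (d : ℕ) (a b : Fin (d+1)) : ∀ (u v : Word d),
    shuffleWord d (u ++ [a]) (v ++ [b]) =
      Finsupp.mapDomain (· ++ [a]) (shuffleWord d u (v ++ [b])) +
      Finsupp.mapDomain (· ++ [b]) (shuffleWord d (u ++ [a]) v) := by
  suffices H : ∀ N (u v : Word d), u.length + v.length = N →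
      shuffleWord d (u ++ [a]) (v ++ [b]) =
      Finsupp.mapDomain (· ++ [a]) (shuffleWord d u (v ++ [b])) +
      Finsupp.mapDomain (· ++ [b]) (shuffleWord d (u ++ [a]) v) by
    intro u v; exact H _ u v rfl
  intro N
  induction N using Nat.strong_induction_on with
  | _ N ih =>
    intro u v hN
    match u, v with
    | [], [] =>
        simp only [List.nil_append]
        rw [shuffle_cons d a b [] []]
        simp only [shuffle_nil_left, shuffle_nil_right, Finsupp.mapDomain_single,
          List.cons_append, List.nil_append, List.singleton_append]
        exact add_comm _ _
    | [], c :: v' =>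
        have ih1 := ih (v'.length) (by simp at hN; omega) [] v' (by simp)
        simp only [List.nil_append, List.cons_append] at ih1 ⊢
        rw [shuffle_cons d a c [] (v' ++ [b]), ih1,
          shuffle_cons d a c [] v']
        simp only [shuffle_nil_left, Finsupp.mapDomain_add, Finsupp.mapDomain_single,
          mapDomain_cons_append, List.cons_append, List.append_assoc]
        abel
    | p :: u', [] =>
        have ih1 := ih (u'.length) (by simp at hN; omega) u' [] (by simp)
        simp only [List.nil_append, List.cons_append] at ih1 ⊢
        rw [shuffle_cons d p b (u' ++ [a]) [], ih1,
          shuffle_cons d p b u' []]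
        simp only [shuffle_nil_right, Finsupp.mapDomain_add, Finsupp.mapDomain_single,
          mapDomain_cons_append, List.cons_append, List.append_assoc]
        abel
    | p :: u', q :: v' =>
        have ih1 := ih (u'.length + (q :: v').length) (by simp at hN ⊢; omega) u' (q :: v') rfl
        have ih2 := ih ((p :: u').length + v'.length) (by simp at hN ⊢; omega) (p :: u') v' rfl
        simp only [List.cons_append] at ih1 ih2 ⊢
        rw [shuffle_cons d p q (u' ++ [a]) (v' ++ [b]), ih1, ih2,
          shuffle_cons d p q u' (v' ++ [b]),
          shuffle_cons d p q (u' ++ [a]) v']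
        simp only [Finsupp.mapDomain_add, mapDomain_cons_append]
        abel

lemma mapDomain_rev_cons (d : ℕ) (c : Fin (d+1)) (x : KA d) :
    Finsupp.mapDomain List.reverse (Finsupp.mapDomain (List.cons c) x) =
    Finsupp.mapDomain (· ++ [c]) (Finsupp.mapDomain List.reverse x) := by
  rw [← Finsupp.mapDomain_comp, ← Finsupp.mapDomain_comp]
  have : (List.reverse ∘ List.cons c : Word d → Word d) =
      ((· ++ [c]) ∘ List.reverse) := by funext w; simp
  rw [this]

lemma shuffle_reverse (d : ℕ) : ∀ (u v : Word d),
    Finsupp.mapDomain List.reverse (shuffleWord d u v) =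
      shuffleWord d u.reverse v.reverse := by
  suffices H : ∀ N (u v : Word d), u.length + v.length = N →
      Finsupp.mapDomain List.reverse (shuffleWord d u v) =
      shuffleWord d u.reverse v.reverse by
    intro u v; exact H _ u v rfl
  intro N
  induction N using Nat.strong_induction_on with
  | _ N ih =>
    intro u v hN
    match u, v with
    | [], v =>
        simp [shuffle_nil_left, Finsupp.mapDomain_single]
    | p :: u', [] =>
        simp [shuffle_nil_right, Finsupp.mapDomain_single]
    | p :: u', q :: v' =>
        have ih1 := ih (u'.length + (q :: v').length) (by simp at hN ⊢; omega) u' (q :: v') rfl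
        have ih2 := ih ((p :: u').length + v'.length) (by simp at hN ⊢; omega) (p :: u') v' rfl
        rw [shuffle_cons, Finsupp.mapDomain_add, mapDomain_rev_cons, mapDomain_rev_cons,
          ih1, ih2]
        have h1 : (q :: v').reverse = v'.reverse ++ [q] := by simp
        have h2 : (p :: u').reverse = u'.reverse ++ [p] := by simp
        rw [h1, h2, shuffle_snoc]

lemma adm_append_zero {d : ℕ} {w : Word d} (h : Admissible d w) :
    Admissible d (w ++ [0]) := by
  induction h with
  | nil => exact Admissible.zero Admissible.nil
  | zero _ ih => exact Admissible.zero ih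
  | pair a ha _ ih => exact Admissible.pair a ha ih

lemma adm_append_pair {d : ℕ} {w : Word d} (a : Fin (d+1)) (ha : a ≠ 0)
    (h : Admissible d w) : Admissible d (w ++ [a, a]) := by
  induction h with
  | nil => exact Admissible.pair a ha Admissible.nil
  | zero _ ih => exact Admissible.zero ih
  | pair b hb _ ih => exact Admissible.pair b hb ih

lemma adm_reverse {d : ℕ} {w : Word d} (h : Admissible d w) :
    Admissible d w.reverse := by
  induction h with
  | nil => exact Admissible.nil
  | zero _ ih =>
      rw [List.reverse_cons]
      exact adm_append_zero ih
  | pair a ha _ ih =>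
      rw [List.reverse_cons, List.reverse_cons, List.append_assoc]
      exact adm_append_pair a ha ih

lemma adm_reverse_iff {d : ℕ} (w : Word d) :
    Admissible d w.reverse ↔ Admissible d w := by
  constructor
  · intro h; simpa using adm_reverse h
  · exact adm_reverse

lemma Ebar_reverse (d : ℕ) (t : ℝ) (w : Word d) :
    Ebar d t w.reverse = Ebar d t w := by
  simp only [Ebar, nc, zc, dc, List.count_reverse, List.length_reverse]
  by_cases h : Admissible d w
  · rw [if_pos h, if_pos (adm_reverse h)]
  · rw [if_neg h, if_neg (fun hc => h ((adm_reverse_iff w).mp hc))]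

lemma EbarL_mapDomain_reverse (d : ℕ) (t : ℝ) (x : KA d) :
    EbarL d t (Finsupp.mapDomain List.reverse x) = EbarL d t x := by
  unfold EbarL
  rw [Finsupp.sum_mapDomain_index (by intro a; simp) (by intro a b₁ b₂; ring)]
  simp only [Ebar_reverse]

lemma EbarL_smul (d : ℕ) (t : ℝ) (c : ℝ) (x : KA d) :
    EbarL d t (c • x) = c * EbarL d t x := by
  unfold EbarL
  rw [Finsupp.sum_smul_index' (by intro a; simp)]
  rw [Finsupp.mul_sum]
  simp [mul_assoc]

lemma sh_single (d : ℕ) (u v : Word d) (c c' : ℝ) :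
    sh d (Finsupp.single u c) (Finsupp.single v c') = (c * c') • shuffleWord d u v := by
  unfold sh
  rw [Finsupp.sum_single_index, Finsupp.sum_single_index]
  · simp
  · rw [Finsupp.sum_single_index] <;> simp

lemma wordLift_single (d : ℕ) (f : Word d → KA d) (w : Word d) :
    wordLift d f (Finsupp.single w 1) = f w := by
  unfold wordLift
  rw [Finsupp.lsum_single]
  simp [LinearMap.toSpanSingleton]

theorem stmt_10 (d n : ℕ) (hd : 1 ≤ d) (hn : 1 ≤ n) (t : ℝ) (ht : 0 < t)
    {H : Type*} [NormedAddCommGroup H] [InnerProductSpace ℝ H]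
    (Vf : Word d → H) :
    ip d t Vf n (revE d) (revE d) = ip d t Vf n (Sa d) (Sa d) ∧
    ip d t Vf n (Sa d) (Sa d) = ip d t Vf n (idE d) (idE d) := by
  have key : ∀ u v : Fin n → Fin (d+1),
      EbarL d t (shuffleWord d (List.ofFn u).reverse (List.ofFn v).reverse) =
      EbarL d t (shuffleWord d (List.ofFn u) (List.ofFn v)) := by
    intro u v
    rw [← shuffle_reverse, EbarL_mapDomain_reverse]
  constructor
  · unfold ip revE Sa
    refine Finset.sum_congr rfl fun u _ => Finset.sum_congr rfl fun v _ => ?_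
    rw [wordLift_single, wordLift_single, wordLift_single, wordLift_single,
        sh_single, sh_single, EbarL_smul, EbarL_smul]
    simp only [List.length_ofFn, one_mul, ← mul_pow, neg_mul_neg, one_pow]
  · unfold ip Sa idE
    refine Finset.sum_congr rfl fun u _ => Finset.sum_congr rfl fun v _ => ?_
    rw [wordLift_single, wordLift_single, LinearMap.id_coe, id_eq, id_eq,
        sh_single, sh_single, EbarL_smul, EbarL_smul, key]
    simp only [List.length_ofFn, one_mul, ← mul_pow, neg_mul_neg, one_pow]
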